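/- Let $R = k[x_1,\dots,x_m]$ and let $I$ be a ${}^*$strongly Golod monomial ideal, i.e. $\partial^*(I)^2 \subseteq I$. Then the integral closure $\overline{I}$ is also ${}^*$strongly Golod, i.e. $\partial^*(\overline{I})^2 \subseteq \overline{I}$. -/

import Mathlib

open MvPolynomial

variable {m : ℕ} {k : Type*}

/-- An ideal of `k[x_1, …, x_m]` is a monomial ideal if it is generated by monomials. -/
def IsMonomialIdeal [Field k] (I : Ideal (MvPolynomial (Fin m) k)) : Prop :=
  ∃ S : Set (Fin m →₀ ℕ), I = Ideal.span ((fun e => monomial e (1 : k)) '' S)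

/-- `e` is the exponent vector of a minimal monomial generator of `I`: the monomial `x^e`
lies in `I` and no proper divisor of it lies in `I`. -/
def IsMinMonomialGen [Field k] (I : Ideal (MvPolynomial (Fin m) k)) (e : Fin m →₀ ℕ) : Prop :=
  monomial e (1 : k) ∈ I ∧ ∀ e' : Fin m →₀ ℕ, e' ≤ e → e' ≠ e → monomial e' (1 : k) ∉ I

/-- `∂*(I)`: the ideal generated by all quotients `f / x_i`, where `f` runs over the minimal
monomial generators of `I` and `x_i` over the variables dividing `f`. -/
noncomputable def partialStar [Field k] (I : Ideal (MvPolynomial (Fin m) k)) :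
    Ideal (MvPolynomial (Fin m) k) :=
  Ideal.span { p | ∃ (e : Fin m →₀ ℕ) (i : Fin m), IsMinMonomialGen I e ∧ e i ≠ 0 ∧
    p = monomial (e - Finsupp.single i 1) (1 : k) }

/-- The integral closure of a monomial ideal `I`: the (monomial) ideal generated by the
monomials `f` such that `f^r ∈ I^r` for some `r ≥ 1`. -/
noncomputable def monomialIntegralClosure [Field k] (I : Ideal (MvPolynomial (Fin m) k)) :
    Ideal (MvPolynomial (Fin m) k) :=
  Ideal.span { p | ∃ (e : Fin m →₀ ℕ) (r : ℕ), 1 ≤ r ∧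
    (monomial e (1 : k)) ^ r ∈ I ^ r ∧ p = monomial e (1 : k) }

/-! ### Auxiliary lemmas -/

open Pointwise

section Aux

variable [Field k]

/-- Evaluation of a multiset sum of finitely supported functions. -/
private lemma SG.eval_msum (s : Multiset (Fin m →₀ ℕ)) (p : Fin m) :
    (s.sum) p = (s.map (fun v => v p)).sum :=
  map_multiset_sum (Finsupp.applyAddHom p) s

/-- If a monomial divides another one, membership in an ideal is inherited. -/
private lemma SG.mem_of_le {I : Ideal (MvPolynomial (Fin m) k)} {e c : Fin m →₀ ℕ}
    (h : e ≤ c) (he : monomial e (1 : k) ∈ I) : monomial c (1 : k) ∈ I := by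
  have hme : monomial (c - e) (1 : k) * monomial e (1 : k) = monomial c (1 : k) := by
    rw [monomial_mul, one_mul, tsub_add_cancel_of_le h]
  rw [← hme]
  exact I.mul_mem_left _ he

/-- Membership of a monomial in a monomial ideal is equivalent to domination of exponents. -/
private lemma SG.mono_mem_span_iff (A : Set (Fin m →₀ ℕ)) (c : Fin m →₀ ℕ) :
    monomial c (1 : k) ∈ Ideal.span ((fun e => monomial e (1 : k)) '' A) ↔
      ∃ a ∈ A, a ≤ c := by
  constructor
  · intro h
    refine mem_ideal_span_monomial_image.mp h c ?_
    rw [mem_support_iff, coeff_monomial, if_pos rfl]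
    exact one_ne_zero
  · rintro ⟨a, ha, hle⟩
    exact SG.mem_of_le hle (Ideal.subset_span ⟨a, ha, rfl⟩)

/-- Iterated sum-sets of a set of exponent vectors. -/
private def SG.sumSet (S : Set (Fin m →₀ ℕ)) : ℕ → Set (Fin m →₀ ℕ)
  | 0 => {0}
  | (r+1) => Set.image2 (· + ·) (SG.sumSet S r) S

private lemma SG.span_pow (S : Set (Fin m →₀ ℕ)) (r : ℕ) :
    (Ideal.span ((fun e => monomial e (1 : k)) '' S)) ^ r
      = Ideal.span ((fun e => monomial e (1 : k)) '' SG.sumSet S r) := by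
  induction r with
  | zero =>
      rw [pow_zero, Ideal.one_eq_top]
      have himg : ((fun e => monomial e (1 : k)) '' SG.sumSet S 0)
          = {monomial (0 : Fin m →₀ ℕ) (1 : k)} := by
        simp [SG.sumSet]
      rw [himg]
      have h1 : (monomial (0 : Fin m →₀ ℕ) (1 : k)) = 1 := by simp
      rw [h1, Ideal.span_singleton_one]
  | succ n ih =>
      rw [pow_succ, ih, Ideal.span_mul_span']
      congr 1
      have : ((fun e => monomial e (1 : k)) '' SG.sumSet S n)
            * ((fun e => monomial e (1 : k)) '' S)
          = Set.image2 (fun a b => monomial a (1 : k) * monomial b (1 : k))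
              (SG.sumSet S n) S := by
        rw [← Set.image2_mul, Set.image2_image_left, Set.image2_image_right]
      rw [this]
      show _ = (fun e => monomial e (1 : k)) '' Set.image2 (· + ·) (SG.sumSet S n) S
      rw [Set.image_image2]
      apply Set.image2_congr
      intro a _ b _
      rw [monomial_mul, one_mul]

private lemma SG.mem_sumSet {S : Set (Fin m →₀ ℕ)} :
    ∀ {r : ℕ} {s : Fin m →₀ ℕ}, s ∈ SG.sumSet S r →
      ∃ Q : Multiset (Fin m →₀ ℕ), Multiset.card Q = r ∧ (∀ q ∈ Q, q ∈ S) ∧ Q.sum = s := by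
  intro r
  induction r with
  | zero =>
      intro s hs
      refine ⟨0, rfl, by simp, ?_⟩
      simp only [SG.sumSet, Set.mem_singleton_iff] at hs
      simp [hs]
  | succ n ih =>
      intro s hs
      obtain ⟨t, ht, u, hu, rfl⟩ := hs
      obtain ⟨Q, hcard, hmem, hsum⟩ := ih ht
      refine ⟨u ::ₘ Q, by simp [hcard], ?_, ?_⟩
      · intro q hq
        rcases Multiset.mem_cons.mp hq with h | h
        · rw [h]; exact hu
        · exact hmem q h
      · rw [Multiset.sum_cons, hsum, add_comm]

/-- Analysis: membership of a monomial in a power of a monomial ideal gives a multiset of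
exponents of monomials of `I` whose sum is dominated. -/
private lemma SG.exists_rep {I : Ideal (MvPolynomial (Fin m) k)} {S : Set (Fin m →₀ ℕ)}
    (hS : I = Ideal.span ((fun e => monomial e (1 : k)) '' S)) {c : Fin m →₀ ℕ} {r : ℕ}
    (hc : monomial c (1 : k) ∈ I ^ r) :
    ∃ Q : Multiset (Fin m →₀ ℕ), Multiset.card Q = r ∧
      (∀ q ∈ Q, monomial q (1 : k) ∈ I) ∧ Q.sum ≤ c := by
  rw [hS, SG.span_pow, SG.mono_mem_span_iff] at hc
  obtain ⟨s, hs, hle⟩ := hc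
  obtain ⟨Q, hcard, hmem, hsum⟩ := SG.mem_sumSet hs
  refine ⟨Q, hcard, ?_, hsum ▸ hle⟩
  intro q hq
  rw [hS]
  exact Ideal.subset_span ⟨q, hmem q hq, rfl⟩

/-- Synthesis: a multiset of at least `N` monomials of `I` whose exponent sum is dominated by `c`
witnesses `x^c ∈ I^N`. -/
private lemma SG.pow_mem_of_multiset {I : Ideal (MvPolynomial (Fin m) k)} :
    ∀ (N : ℕ) (c : Fin m →₀ ℕ) (Q : Multiset (Fin m →₀ ℕ)),
      (∀ q ∈ Q, monomial q (1 : k) ∈ I) → N ≤ Multiset.card Q → Q.sum ≤ c →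
      monomial c (1 : k) ∈ I ^ N := by
  intro N
  induction N with
  | zero => intro c Q _ _ _; rw [pow_zero, Ideal.one_eq_top]; exact Submodule.mem_top
  | succ n ih =>
      intro c Q hmem hcard hsum
      have hQ : Q ≠ 0 := by
        intro h
        rw [h] at hcard
        simp at hcard
      obtain ⟨q, hq⟩ := Multiset.exists_mem_of_ne_zero hQ
      obtain ⟨Q', rfl⟩ := Multiset.exists_cons_of_mem hq
      rw [Multiset.sum_cons] at hsum
      have hqc : q ≤ c := le_trans (le_self_add) hsum
      have h1 : Q'.sum ≤ c - q := le_tsub_of_add_le_left hsum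
      have h2 : monomial (c - q) (1 : k) ∈ I ^ n := by
        refine ih (c - q) Q' (fun x hx => hmem x (Multiset.mem_cons_of_mem hx)) ?_ h1
        rw [Multiset.card_cons] at hcard
        omega
      have hme : monomial (c - q) (1 : k) * monomial q (1 : k) = monomial c (1 : k) := by
        rw [monomial_mul, one_mul, tsub_add_cancel_of_le hqc]
      rw [pow_succ, ← hme]
      exact Ideal.mul_mem_mul h2 (hmem q (Multiset.mem_cons_self q Q'))

/-- Every monomial of `I` is divisible by a minimal monomial generator. -/
private lemma SG.exists_minGen {I : Ideal (MvPolynomial (Fin m) k)} {e : Fin m →₀ ℕ}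
    (he : monomial e (1 : k) ∈ I) : ∃ g, g ≤ e ∧ IsMinMonomialGen I g := by
  classical
  suffices h : ∀ (n : ℕ) (e : Fin m →₀ ℕ), (∑ p, e p) ≤ n → monomial e (1 : k) ∈ I →
      ∃ g, g ≤ e ∧ IsMinMonomialGen I g from h (∑ p, e p) e le_rfl he
  intro n
  induction n with
  | zero =>
      intro e hdeg he
      refine ⟨e, le_rfl, he, ?_⟩
      intro e' hle hne
      exfalso
      apply hne
      ext p
      have h1 : e p = 0 := by
        have := Finset.sum_eq_zero_iff.mp (Nat.le_zero.mp hdeg) p (Finset.mem_univ p)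
        exact this
      have h2 := Finsupp.le_def.mp hle p
      omega
  | succ n ih =>
      intro e hdeg he
      by_cases hmin : ∀ e' ≤ e, e' ≠ e → monomial e' (1 : k) ∉ I
      · exact ⟨e, le_rfl, he, hmin⟩
      · push_neg at hmin
        obtain ⟨e', hle, hne, he'⟩ := hmin
        have hdeg' : (∑ p, e' p) < ∑ p, e p := by
          obtain ⟨p0, hp0⟩ : ∃ p, e' p ≠ e p := by
            by_contra hc
            push_neg at hc
            exact hne (by ext p; exact hc p)
          exact Finset.sum_lt_sum (fun p _ => Finsupp.le_def.mp hle p)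
            ⟨p0, Finset.mem_univ _, lt_of_le_of_ne (Finsupp.le_def.mp hle p0) hp0⟩
        obtain ⟨g, hg, hgm⟩ := ih e' (by omega) he'
        exact ⟨g, le_trans hg hle, hgm⟩

/-- Replace a multiset of monomials of `I` by minimal generators dividing them. -/
private lemma SG.reduce_multiset {I : Ideal (MvPolynomial (Fin m) k)}
    (R₀ : Multiset (Fin m →₀ ℕ)) (h : ∀ s ∈ R₀, monomial s (1 : k) ∈ I) :
    ∃ R : Multiset (Fin m →₀ ℕ), Multiset.card R = Multiset.card R₀ ∧
      (∀ g ∈ R, IsMinMonomialGen I g) ∧ R.sum ≤ R₀.sum := by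
  induction R₀ using Multiset.induction_on with
  | empty => exact ⟨0, rfl, by simp, le_rfl⟩
  | cons s R₀ ih =>
      obtain ⟨R, hc, hm, hs⟩ := ih (fun x hx => h x (Multiset.mem_cons_of_mem hx))
      obtain ⟨g, hg, hgm⟩ := SG.exists_minGen (h s (Multiset.mem_cons_self s R₀))
      refine ⟨g ::ₘ R, by simp [hc], ?_, ?_⟩
      · intro x hx
        rcases Multiset.mem_cons.mp hx with h' | h'
        · rw [h']; exact hgm
        · exact hm x h'
      · rw [Multiset.sum_cons, Multiset.sum_cons]
        exact add_le_add hg hs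

private lemma SG.closure_eq_span (I : Ideal (MvPolynomial (Fin m) k)) :
    monomialIntegralClosure I = Ideal.span ((fun e => monomial e (1 : k)) ''
      {e | ∃ r : ℕ, 1 ≤ r ∧ (monomial e (1 : k)) ^ r ∈ I ^ r}) := by
  unfold monomialIntegralClosure
  congr 1
  ext p
  constructor
  · rintro ⟨e, r, hr, hm, rfl⟩
    exact ⟨e, ⟨r, hr, hm⟩, rfl⟩
  · rintro ⟨e, ⟨r, hr, hm⟩, rfl⟩
    exact ⟨e, r, hr, hm, rfl⟩

private lemma SG.mem_closure_iff {I : Ideal (MvPolynomial (Fin m) k)} {c : Fin m →₀ ℕ} :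
    monomial c (1 : k) ∈ monomialIntegralClosure I ↔
      ∃ r : ℕ, 1 ≤ r ∧ (monomial c (1 : k)) ^ r ∈ I ^ r := by
  rw [SG.closure_eq_span, SG.mono_mem_span_iff]
  constructor
  · rintro ⟨e, ⟨r, hr, hm⟩, hle⟩
    refine ⟨r, hr, ?_⟩
    rw [monomial_pow, one_pow] at hm ⊢
    refine SG.mem_of_le ?_ hm
    rw [Finsupp.le_def]
    intro p
    rw [Finsupp.smul_apply, Finsupp.smul_apply, smul_eq_mul, smul_eq_mul]
    exact Nat.mul_le_mul_left r (Finsupp.le_def.mp hle p)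
  · rintro ⟨r, hr, hm⟩
    exact ⟨c, ⟨r, hr, hm⟩, le_rfl⟩

/-- The key combinatorial construction ("half lemma"): if `r•a` dominates a sum of `r` minimal
generators of a strongly Golod monomial ideal `I` and `a i ≥ 1`, then there are `M ≥ 1` and a
multiset of at least `M` monomials of `I` whose sum is dominated by `2M•(a - eᵢ)`. -/
private lemma SG.half {I : Ideal (MvPolynomial (Fin m) k)}
    (hsg : partialStar I * partialStar I ≤ I)
    {a : Fin m →₀ ℕ} {i : Fin m} (hai : 1 ≤ a i) {r : ℕ} (hr : 1 ≤ r)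
    {R : Multiset (Fin m →₀ ℕ)} (hcard : Multiset.card R = r)
    (hmin : ∀ g ∈ R, IsMinMonomialGen I g) (hsum : R.sum ≤ r • a) :
    ∃ (M : ℕ) (Q : Multiset (Fin m →₀ ℕ)), 1 ≤ M ∧
      (∀ q ∈ Q, monomial q (1 : k) ∈ I) ∧ M ≤ Multiset.card Q ∧
      Q.sum ≤ (2 * M) • (a - Finsupp.single i 1) := by
  classical
  set Δ : ℕ := (R.map (fun g => g i)).sum with hΔdef
  set di : ℕ := r * a i - Δ with hdidef
  set σ : ℕ := r - di with hσdef
  set K : ℕ := max Δ 1 with hKdef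
  set ci : (Fin m →₀ ℕ) → (Fin m →₀ ℕ) :=
    fun g => (g - Finsupp.single i 1) + (g - Finsupp.single i 1) with hcidef
  set t : Fin m →₀ ℕ := a - Finsupp.single i 1 with htdef
  set f : (Fin m →₀ ℕ) → Multiset (Fin m →₀ ℕ) := fun g =>
    if g i = 0 then Multiset.replicate (4 * K) g
    else if g i = 1 then
      Multiset.replicate (4 * (K - σ)) g + Multiset.replicate (2 * σ) (ci g)
    else Multiset.replicate (4 * (K - σ)) g with hfdef
  -- scalar facts
  have hΔle : Δ ≤ r * a i := by
    have h1 := Finsupp.le_def.mp hsum i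
    rw [Finsupp.smul_apply, smul_eq_mul] at h1
    rw [hΔdef, ← SG.eval_msum]
    exact h1
  have hdiΔ : di + Δ = r * a i := by rw [hdidef]; omega
  have hK1 : 1 ≤ K := le_max_right _ _
  have hΔK : Δ ≤ K := le_max_left _ _
  have hσr : σ ≤ r := by rw [hσdef]; omega
  have hrra : r ≤ r * a i := Nat.le_mul_of_pos_right r (by omega)
  have hσΔ : σ ≤ Δ := by omega
  have hσK : σ ≤ K := le_trans hσΔ hΔK
  -- SG consequence: for a minimal generator g with g i ≠ 0, x^(ci g) ∈ I
  have hci_mem : ∀ g, IsMinMonomialGen I g → g i ≠ 0 → monomial (ci g) (1 : k) ∈ I := by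
    intro g hg hne
    have h1 : monomial (g - Finsupp.single i 1) (1 : k) ∈ partialStar I :=
      Ideal.subset_span ⟨g, i, hg, hne, rfl⟩
    have h2 := hsg (Ideal.mul_mem_mul h1 h1)
    rwa [monomial_mul, one_mul] at h2
  refine ⟨2 * K * r, R.bind f, ?_, ?_, ?_, ?_⟩
  · -- 1 ≤ M
    have : 0 < 2 * K * r := by positivity
    omega
  · -- elements are monomials of I
    intro q hq
    obtain ⟨g, hgR, hqf⟩ := Multiset.mem_bind.mp hq
    have hg := hmin g hgR
    rw [hfdef] at hqf
    simp only at hqf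
    split_ifs at hqf with h0 h1
    · rw [Multiset.eq_of_mem_replicate hqf]; exact hg.1
    · rcases Multiset.mem_add.mp hqf with h | h
      · rw [Multiset.eq_of_mem_replicate h]; exact hg.1
      · rw [Multiset.eq_of_mem_replicate h]; exact hci_mem g hg (by omega)
    · rw [Multiset.eq_of_mem_replicate hqf]; exact hg.1
  · -- cardinality bound
    have key : ∀ g ∈ R, 4 * K ≤ Multiset.card (f g) + 2 * σ * g i := by
      intro g _
      rw [hfdef]
      simp only
      split_ifs with h0 h1
      · rw [Multiset.card_replicate]; omega
      · rw [Multiset.card_add, Multiset.card_replicate, Multiset.card_replicate, h1]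
        omega
      · rw [Multiset.card_replicate]
        have hgi2 : 2 ≤ g i := by omega
        have : 2 * σ * 2 ≤ 2 * σ * g i := Nat.mul_le_mul_left _ hgi2
        omega
    have hsum1 : (R.map (fun _ => 4 * K)).sum ≤
        (R.map (fun g => Multiset.card (f g) + 2 * σ * g i)).sum :=
      Multiset.sum_map_le_sum_map _ _ key
    have hL : (R.map (fun _ => 4 * K)).sum = r * (4 * K) := by
      rw [Multiset.map_const', Multiset.sum_replicate, smul_eq_mul, hcard]
    have hRs : (R.map (fun g => Multiset.card (f g) + 2 * σ * g i)).sum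
        = (R.map (fun g => Multiset.card (f g))).sum + 2 * σ * Δ := by
      rw [Multiset.sum_map_add]
      congr 1
      rw [hΔdef]
      have : (R.map (fun g => 2 * σ * g i)).sum
          = (R.map (fun g => (2 * σ) * (fun g : Fin m →₀ ℕ => g i) g)).sum := rfl
      rw [this, Multiset.sum_map_mul_left]
    have hcb : Multiset.card (R.bind f) = (R.map (fun g => Multiset.card (f g))).sum := by
      rw [Multiset.card_bind]; rfl
    rw [hL, hRs] at hsum1
    rw [hcb]
    have hmul : σ * Δ ≤ r * K := Nat.mul_le_mul hσr hΔK
    -- now linear arithmetic with atoms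
    have e1 : r * (4 * K) = 4 * (r * K) := by ring
    have e2 : 2 * K * r = 2 * (r * K) := by ring
    have e3 : 2 * σ * Δ = 2 * (σ * Δ) := by ring
    rw [e1, e3] at hsum1
    rw [e2]
    omega
  · -- sum bound
    rw [Finsupp.le_def]
    intro p
    have hQsum : ((R.bind f).sum) p = (R.map (fun g => ((f g).sum) p)).sum := by
      rw [Multiset.sum_bind, SG.eval_msum, Multiset.map_map]
      rfl
    have hRHS : ((2 * (2 * K * r)) • t) p
        = 2 * (2 * K * r) * ((a p) - (Finsupp.single i 1 : Fin m →₀ ℕ) p) := by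
      rw [Finsupp.smul_apply, smul_eq_mul, htdef, Finsupp.tsub_apply]
    show ((R.bind f).sum) p ≤ ((2 * (2 * K * r)) • t) p
    rw [hQsum, hRHS]
    by_cases hpi : p = i
    · -- coordinate i
      subst hpi
      have key : ∀ g ∈ R, ((f g).sum) p ≤ 4 * (K - σ) * g p := by
        intro g _
        rw [hfdef]
        simp only
        split_ifs with h0 h1
        · rw [SG.eval_msum, Multiset.map_replicate, Multiset.sum_replicate, smul_eq_mul, h0]
          omega
        · rw [SG.eval_msum, Multiset.map_add, Multiset.map_replicate, Multiset.map_replicate,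
            Multiset.sum_add, Multiset.sum_replicate, Multiset.sum_replicate, smul_eq_mul,
            smul_eq_mul]
          have hcip : (ci g) p = 0 := by
            rw [hcidef]
            simp only [Finsupp.add_apply, Finsupp.tsub_apply, Finsupp.single_eq_same, h1]
          rw [hcip, h1]
          omega
        · rw [SG.eval_msum, Multiset.map_replicate, Multiset.sum_replicate, smul_eq_mul]
      have h2 : (R.map (fun g => ((f g).sum) p)).sum ≤
          (R.map (fun g => 4 * (K - σ) * g p)).sum :=
        Multiset.sum_map_le_sum_map _ _ key
      have h3 : (R.map (fun g => 4 * (K - σ) * g p)).sum = 4 * (K - σ) * Δ := by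
        rw [hΔdef]
        exact Multiset.sum_map_mul_left
      rw [h3] at h2
      refine le_trans h2 ?_
      -- scalar: 4 * (K - σ) * Δ ≤ 2 * (2*K*r) * (a p - 1)
      rw [Finsupp.single_eq_same]
      by_cases hΔ0 : Δ = 0
      · rw [hΔ0]; simp
      · have hKΔ : K = Δ := by rw [hKdef]; omega
        have hWr : r * (a p - 1) + r = r * a p := by
          have ha1 : a p - 1 + 1 = a p := by omega
          rw [← Nat.mul_succ]
          rw [Nat.succ_eq_add_one, ha1]
        have h5 : Δ - σ ≤ r * (a p - 1) := by omega
        have h6 : (Δ - σ) * Δ ≤ (r * (a p - 1)) * Δ := Nat.mul_le_mul_right Δ h5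
        calc 4 * (K - σ) * Δ = 4 * ((Δ - σ) * Δ) := by rw [hKΔ]; ring
          _ ≤ 4 * ((r * (a p - 1)) * Δ) := by omega
          _ = 2 * (2 * Δ * r) * (a p - 1) := by ring
          _ = 2 * (2 * K * r) * (a p - 1) := by rw [hKΔ]
    · -- coordinate p ≠ i
      have key : ∀ g ∈ R, ((f g).sum) p ≤ 4 * K * g p := by
        intro g _
        rw [hfdef]
        simp only
        split_ifs with h0 h1
        · rw [SG.eval_msum, Multiset.map_replicate, Multiset.sum_replicate, smul_eq_mul]
        · rw [SG.eval_msum, Multiset.map_add, Multiset.map_replicate, Multiset.map_replicate,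
            Multiset.sum_add, Multiset.sum_replicate, Multiset.sum_replicate, smul_eq_mul,
            smul_eq_mul]
          have hcip : (ci g) p = g p + g p := by
            rw [hcidef]
            simp only [Finsupp.add_apply, Finsupp.tsub_apply]
            rw [Finsupp.single_eq_of_ne hpi]
            omega
          rw [hcip]
          have e : 4 * (K - σ) + 4 * σ = 4 * K := by omega
          refine le_of_eq ?_
          calc 4 * (K - σ) * g p + 2 * σ * (g p + g p)
              = (4 * (K - σ) + 4 * σ) * g p := by ring
            _ = 4 * K * g p := by rw [e]
        · rw [SG.eval_msum, Multiset.map_replicate, Multiset.sum_replicate, smul_eq_mul]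
          exact Nat.mul_le_mul_right _ (by omega)
      have h2 : (R.map (fun g => ((f g).sum) p)).sum ≤
          (R.map (fun g => 4 * K * g p)).sum :=
        Multiset.sum_map_le_sum_map _ _ key
      have h3 : (R.map (fun g => 4 * K * g p)).sum = 4 * K * ((R.sum) p) := by
        rw [SG.eval_msum]
        exact Multiset.sum_map_mul_left
      rw [h3] at h2
      have h4 : (R.sum) p ≤ r * a p := by
        have := Finsupp.le_def.mp hsum p
        rwa [Finsupp.smul_apply, smul_eq_mul] at this
      have h5 : (Finsupp.single i 1) p = 0 := Finsupp.single_eq_of_ne hpi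
      rw [h5, Nat.sub_zero]
      calc (R.map (fun g => ((f g).sum) p)).sum ≤ 4 * K * ((R.sum) p) := h2
        _ ≤ 4 * K * (r * a p) := Nat.mul_le_mul_left _ h4
        _ = 2 * (2 * K * r) * a p := by ring

end Aux

/-- If `I` is a `*`strongly Golod monomial ideal (`∂*(I)² ⊆ I`), then so is its integral
closure. -/
theorem integralClosure_strongly_golod [Field k] (I : Ideal (MvPolynomial (Fin m) k))
    (hmon : IsMonomialIdeal I) (hsg : partialStar I * partialStar I ≤ I) :
    partialStar (monomialIntegralClosure I) * partialStar (monomialIntegralClosure I)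
      ≤ monomialIntegralClosure I := by
  classical
  obtain ⟨S, hS⟩ := hmon
  rw [partialStar, Ideal.span_mul_span']
  rw [Ideal.span_le]
  rintro x hx
  rw [Set.mem_mul] at hx
  obtain ⟨px, hpx, qx, hqx, rfl⟩ := hx
  obtain ⟨a, i, hamin, hai, rfl⟩ := hpx
  obtain ⟨b, j, hbmin, hbj, rfl⟩ := hqx
  rw [SetLike.mem_coe, monomial_mul, one_mul]
  -- extract integral-closure representations for a and b
  have hextract : ∀ (c : Fin m →₀ ℕ), monomial c (1 : k) ∈ monomialIntegralClosure I →
      ∃ (r : ℕ) (R : Multiset (Fin m →₀ ℕ)), 1 ≤ r ∧ Multiset.card R = r ∧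
        (∀ g ∈ R, IsMinMonomialGen I g) ∧ R.sum ≤ r • c := by
    intro c hc
    obtain ⟨r, hr, hpow⟩ := SG.mem_closure_iff.mp hc
    rw [monomial_pow, one_pow] at hpow
    obtain ⟨Q₀, hc0, hm0, hs0⟩ := SG.exists_rep hS hpow
    obtain ⟨R, hcR, hmR, hsR⟩ := SG.reduce_multiset Q₀ hm0
    exact ⟨r, R, hr, by rw [hcR, hc0], hmR, le_trans hsR hs0⟩
  obtain ⟨ra, Ra, hra, hcRa, hmRa, hsRa⟩ := hextract a hamin.1
  obtain ⟨rb, Rb, hrb, hcRb, hmRb, hsRb⟩ := hextract b hbmin.1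
  obtain ⟨Ma, Qa, hMa, hQaI, hQac, hQas⟩ := SG.half hsg (Nat.one_le_iff_ne_zero.mpr hai)
    hra hcRa hmRa hsRa
  obtain ⟨Mb, Qb, hMb, hQbI, hQbc, hQbs⟩ := SG.half hsg (Nat.one_le_iff_ne_zero.mpr hbj)
    hrb hcRb hmRb hsRb
  set ct : Fin m →₀ ℕ := (a - Finsupp.single i 1) + (b - Finsupp.single j 1) with hct
  set N : ℕ := 2 * Ma * Mb with hN
  have hN1 : 1 ≤ N := by
    have : 0 < 2 * Ma * Mb := by positivity
    omega
  -- show x^ct ∈ monomialIntegralClosure I with exponent N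
  rw [SG.mem_closure_iff]
  refine ⟨N, hN1, ?_⟩
  rw [monomial_pow, one_pow]
  set Qt : Multiset (Fin m →₀ ℕ) := Mb • Qa + Ma • Qb with hQt
  apply SG.pow_mem_of_multiset (k := k) N (N • ct) Qt
  · intro q hq
    rcases Multiset.mem_add.mp hq with h | h
    · exact hQaI q (Multiset.mem_of_mem_nsmul h)
    · exact hQbI q (Multiset.mem_of_mem_nsmul h)
  · rw [hQt, Multiset.card_add, Multiset.card_nsmul, Multiset.card_nsmul]
    have h1 : Mb * Ma ≤ Mb * Multiset.card Qa := Nat.mul_le_mul_left _ hQac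
    have h2 : Ma * Mb ≤ Ma * Multiset.card Qb := Nat.mul_le_mul_left _ hQbc
    have e1 : N = 2 * (Ma * Mb) := by rw [hN]; ring
    have e2 : Mb * Ma = Ma * Mb := by ring
    omega
  · rw [hQt, Multiset.sum_add, Multiset.sum_nsmul, Multiset.sum_nsmul]
    have h1 : Mb • Qa.sum ≤ Mb • ((2 * Ma) • (a - Finsupp.single i 1)) := by
      rw [Finsupp.le_def]
      intro p
      rw [Finsupp.smul_apply, Finsupp.smul_apply, smul_eq_mul, smul_eq_mul]
      exact Nat.mul_le_mul_left _ (Finsupp.le_def.mp hQas p)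
    have h2 : Ma • Qb.sum ≤ Ma • ((2 * Mb) • (b - Finsupp.single j 1)) := by
      rw [Finsupp.le_def]
      intro p
      rw [Finsupp.smul_apply, Finsupp.smul_apply, smul_eq_mul, smul_eq_mul]
      exact Nat.mul_le_mul_left _ (Finsupp.le_def.mp hQbs p)
    refine le_trans (add_le_add h1 h2) ?_
    rw [Finsupp.le_def]
    intro p
    rw [Finsupp.add_apply, Finsupp.smul_apply, Finsupp.smul_apply, Finsupp.smul_apply,
      Finsupp.smul_apply, Finsupp.smul_apply, smul_eq_mul, smul_eq_mul, smul_eq_mul,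
      smul_eq_mul, smul_eq_mul]
    rw [hct, Finsupp.add_apply]
    have e1 : Mb * (2 * Ma * ((a - Finsupp.single i 1 : Fin m →₀ ℕ) p))
        = N * ((a - Finsupp.single i 1 : Fin m →₀ ℕ) p) := by rw [hN]; ring
    have e2 : Ma * (2 * Mb * ((b - Finsupp.single j 1 : Fin m →₀ ℕ) p))
        = N * ((b - Finsupp.single j 1 : Fin m →₀ ℕ) p) := by rw [hN]; ring
    rw [e1, e2, ← Nat.mul_add]
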